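/- Let U=(A,F) be a binary information system that is both r-i-reduced and a k-information system. Then for every problem z over U, the minimum depth of a decision tree over z that solves z relative to U using both attributes and proper hypotheses is at most rk. -/
import Mathlib


/-- An equation system over a binary information system with element set `A`
is a set of pairs `(g, δ)` encoding equations `g(x) = δ`. It is consistent
if it has a solution in `A`. -/
def Consistent {A : Type} (S : Set ((A → Bool) × Bool)) : Prop :=
  ∃ a : A, ∀ e ∈ S, e.1 a = e.2

/-- The system `S` uses only attributes from `F`. -/
def OverF {A : Type} (F : Set (A → Bool)) (S : Set ((A → Bool) × Bool)) : Prop :=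
  ∀ e ∈ S, e.1 ∈ F

/-- Solution set of an equation system. -/
def Sol {A : Type} (S : Set ((A → Bool) × Bool)) : Set A :=
  {a | ∀ e ∈ S, e.1 a = e.2}

/-- `U = (A, F)` is `r`-i-reduced: every inconsistent (finite) equation system over `U`
has an inconsistent subsystem with at most `r` equations. -/
def IReduced {A : Type} (F : Set (A → Bool)) (r : ℕ) : Prop :=
  ∀ S : Set ((A → Bool) × Bool), OverF F S → S.Finite → ¬ Consistent S →
    ∃ T ⊆ S, ¬ Consistent T ∧ T.ncard ≤ r

/-- `U = (A, F)` is `r`-reduced: every consistent (finite) equation system over `U`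
has a subsystem with the same solution set and at most `r` equations. -/
def RReduced {A : Type} (F : Set (A → Bool)) (r : ℕ) : Prop :=
  ∀ S : Set ((A → Bool) × Bool), OverF F S → S.Finite → Consistent S →
    ∃ T ⊆ S, Sol T = Sol S ∧ T.ncard ≤ r

/-- `InfoLe F k B` holds iff `(B, F)` is an `m`-information system for some `m ≤ k`:
`(B, F)` is a 0-information system iff all attributes of `F` are constant on `B`, and
`(B, F)` is a `(k+1)`-information system iff it is not an `m`-information system for any
`m ≤ k` and for every `f ∈ F` there exist `δ` and `m ≤ k` such that `(B(f,δ), F)` is an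
`m`-information system. -/
def InfoLe {A : Type} (F : Set (A → Bool)) : ℕ → Set A → Prop
  | 0, B => ∀ f ∈ F, ∀ a ∈ B, ∀ b ∈ B, f a = f b
  | k + 1, B => InfoLe F k B ∨ ∀ f ∈ F, ∃ δ : Bool, InfoLe F k {a | a ∈ B ∧ f a = δ}

/-- `U = (A, F)` is (exactly) a `k`-information system. -/
def ExactInfo {A : Type} (F : Set (A → Bool)) (k : ℕ) : Prop :=
  InfoLe F k Set.univ ∧ ∀ m, m < k → ¬ InfoLe F m Set.univ

/-- Decision trees over a problem `z = (f₀, …, f_{n-1})` of dimension `n`: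
a node is a terminal node labeled with an answer tuple, an attribute query
(with two children, for the answers `fᵢ(x) = false` and `fᵢ(x) = true`), or a
hypothesis query `{f₀(x) = δ₀, …, f_{n-1}(x) = δ_{n-1}}` (with a child for the
confirming answer and one child for each possible counterexample `fᵢ(x) = ¬δᵢ`). -/
inductive DT (n : ℕ) : Type where
  | leaf (ans : Fin n → Bool)
  | attr (i : Fin n) (c : Bool → DT n)
  | hyp (δ : Fin n → Bool) (conf : DT n) (ctr : Fin n → DT n)

namespace DT

/-- Depth of a decision tree: maximum number of queries on a complete path. -/
def depth {n : ℕ} : DT n → ℕ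
  | leaf _ => 0
  | attr _ c => 1 + max (depth (c false)) (depth (c true))
  | hyp _ conf ctr => 1 + max (depth conf) (Finset.univ.sup fun i => depth (ctr i))

/-- The tree solves the problem `z` for the element `a`: along every complete path
compatible with `a` (attribute queries are answered truthfully; a true hypothesis
is confirmed, and a false hypothesis may be answered by any valid counterexample),
the terminal label equals `z(a)`. -/
def Solves {A : Type} {n : ℕ} (z : Fin n → A → Bool) (a : A) : DT n → Prop
  | leaf ans => ∀ i, ans i = z i a
  | attr i c => Solves z a (c (z i a))
  | hyp δ conf ctr =>
      ((∀ i, z i a = δ i) → Solves z a conf) ∧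
      (∀ i, z i a ≠ δ i → Solves z a (ctr i))

/-- The tree uses no attribute queries (only hypotheses). -/
def NoAttr {n : ℕ} : DT n → Prop
  | leaf _ => True
  | attr _ _ => False
  | hyp _ conf ctr => NoAttr conf ∧ ∀ i, NoAttr (ctr i)

/-- All hypotheses used in the tree are proper for `U`, i.e. the corresponding
equation system `{f₀(x) = δ₀, …}` is consistent on `A`. -/
def ProperHyps {A : Type} {n : ℕ} (z : Fin n → A → Bool) : DT n → Prop
  | leaf _ => True
  | attr _ c => ∀ b, ProperHyps z (c b)
  | hyp δ conf ctr =>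
      (∃ a : A, ∀ i, z i a = δ i) ∧ ProperHyps z conf ∧ ∀ i, ProperHyps z (ctr i)

end DT

private lemma bool_ne_not {b c : Bool} (h : b ≠ !c) : b = c := by
  cases b <;> cases c <;> simp_all

private lemma key {A : Type} (F : Set (A → Bool)) (r : ℕ) (hr : 1 ≤ r)
    (hI : IReduced F r) {n : ℕ} (z : Fin n → A → Bool) (hz : ∀ i, z i ∈ F)
    (hn : 0 < n) :
    ∀ k (B : Set A), InfoLe F k B →
      ∃ Γ : DT n, (∀ a ∈ B, DT.Solves z a Γ) ∧ DT.ProperHyps z Γ ∧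
        Γ.depth ≤ r * k := by
  intro k
  induction k with
  | zero =>
    intro B hB
    have hB' : ∀ f ∈ F, ∀ a ∈ B, ∀ b ∈ B, f a = f b := hB
    by_cases hBne : B.Nonempty
    · obtain ⟨a0, ha0⟩ := hBne
      refine ⟨DT.leaf (fun i => z i a0), ?_, trivial, Nat.zero_le _⟩
      intro a ha i
      exact hB' (z i) (hz i) a0 ha0 a ha
    · exact ⟨DT.leaf (fun _ => false), fun a ha => absurd ⟨a, ha⟩ hBne, trivial,
        Nat.zero_le _⟩
  | succ k ih =>
    intro B hB
    have hB' : InfoLe F k B ∨ ∀ f ∈ F, ∃ δ : Bool, InfoLe F k {a | a ∈ B ∧ f a = δ} := hB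
    rcases hB' with h | h
    · obtain ⟨Γ, h1, h2, h3⟩ := ih B h
      exact ⟨Γ, h1, h2, h3.trans (Nat.mul_le_mul le_rfl (Nat.le_succ k))⟩
    · choose δ hδ using fun i => h (z i) (hz i)
      set η : Fin n → Bool := fun i => !(δ i) with hη
      choose Γs hΓ1 hΓ2 hΓ3 using fun i => ih _ (hδ i)
      set S : Set ((A → Bool) × Bool) := (fun i => (z i, η i)) '' Set.univ with hS
      have hSfin : S.Finite := Set.finite_univ.image _
      have hSover : OverF F S := by rintro e ⟨i, -, rfl⟩; exact hz i
      by_cases hc : Consistent S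
      · refine ⟨DT.hyp η (DT.leaf η) Γs, ?_, ?_, ?_⟩
        · intro a ha
          refine ⟨fun hall i => (hall i).symm, fun i hi => ?_⟩
          exact hΓ1 i a ⟨ha, bool_ne_not hi⟩
        · obtain ⟨a, ha⟩ := hc
          exact ⟨⟨a, fun i => ha (z i, η i) ⟨i, Set.mem_univ i, rfl⟩⟩, trivial,
            fun i => hΓ2 i⟩
        · have hsup : (Finset.univ.sup fun i => (Γs i).depth) ≤ r * k :=
            Finset.sup_le fun i _ => hΓ3 i
          calc DT.depth (DT.hyp η (DT.leaf η) Γs)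
              = 1 + max 0 (Finset.univ.sup fun i => (Γs i).depth) := rfl
            _ = 1 + (Finset.univ.sup fun i => (Γs i).depth) := by
                rw [Nat.max_eq_right (Nat.zero_le _)]
            _ ≤ r + r * k := Nat.add_le_add hr hsup
            _ = r * (k + 1) := by ring
      · obtain ⟨T, hTS, hTinc, hTcard⟩ := hI S hSover hSfin hc
        have hTfin : T.Finite := hSfin.subset hTS
        haveI : Nonempty (Fin n) := ⟨⟨0, hn⟩⟩
        set g : ((A → Bool) × Bool) → Fin n := Function.invFun (fun i => (z i, η i))
          with hg
        have hgspec : ∀ p ∈ T, (z (g p), η (g p)) = p := by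
          intro p hp
          obtain ⟨i, -, rfl⟩ := hTS hp
          exact Function.invFun_eq (f := fun i => (z i, η i)) ⟨i, rfl⟩
        set I : Finset (Fin n) := hTfin.toFinset.image g with hIdef
        have hIcard : I.card ≤ r := by
          calc I.card ≤ hTfin.toFinset.card := Finset.card_image_le
            _ = T.ncard := (Set.ncard_eq_toFinset_card T hTfin).symm
            _ ≤ r := hTcard
        have hfail : ∀ a : A, ∃ j ∈ I, z j a = δ j := by
          intro a
          by_contra hcon
          push_neg at hcon
          apply hTinc
          refine ⟨a, fun e he => ?_⟩
          have hgI : g e ∈ I := Finset.mem_image_of_mem g (hTfin.mem_toFinset.mpr he)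
          have hne := hcon (g e) hgI
          have hval : z (g e) a = η (g e) := by
            cases hzz : z (g e) a <;> cases hdd : δ (g e) <;>
              simp [hη, hzz, hdd] at hne ⊢
          have h1 : z (g e) = e.1 := congrArg Prod.fst (hgspec e he)
          have h2 : η (g e) = e.2 := congrArg Prod.snd (hgspec e he)
          rw [← h1, ← h2]; exact hval
        have chain : ∀ L : List (Fin n), ∃ Γ : DT n,
            (∀ a ∈ B, (∃ j ∈ L, z j a = δ j) → DT.Solves z a Γ) ∧
            DT.ProperHyps z Γ ∧ Γ.depth ≤ L.length + r * k := by
          intro L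
          induction L with
          | nil =>
            exact ⟨DT.leaf fun _ => false, fun a _ hex => absurd hex (by simp),
              trivial, Nat.zero_le _⟩
          | cons j L' ihL =>
            obtain ⟨Γ', h1', h2', h3'⟩ := ihL
            refine ⟨DT.attr j (fun b => if b = δ j then Γs j else Γ'), ?_, ?_, ?_⟩
            · intro a ha hex
              show DT.Solves z a (if z j a = δ j then Γs j else Γ')
              by_cases hj : z j a = δ j
              · rw [if_pos hj]; exact hΓ1 j a ⟨ha, hj⟩
              · rw [if_neg hj]
                apply h1' a ha
                rcases hex with ⟨j', hj', hzj'⟩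
                rcases List.mem_cons.mp hj' with rfl | hmem
                · exact absurd hzj' hj
                · exact ⟨j', hmem, hzj'⟩
            · intro b
              show DT.ProperHyps z (if b = δ j then Γs j else Γ')
              split
              · exact hΓ2 j
              · exact h2'
            · have hb : ∀ b : Bool,
                  DT.depth (if b = δ j then Γs j else Γ') ≤ L'.length + r * k := by
                intro b
                split
                · exact (hΓ3 j).trans (Nat.le_add_left _ _)
                · exact h3'
              have hd : DT.depth (DT.attr j (fun b => if b = δ j then Γs j else Γ'))
                  = 1 + max (DT.depth (if false = δ j then Γs j else Γ'))
                      (DT.depth (if true = δ j then Γs j else Γ')) := rfl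
              rw [hd, List.length_cons]
              have h1 := hb false
              have h2 := hb true
              omega
        obtain ⟨Γ, h1, h2, h3⟩ := chain I.toList
        refine ⟨Γ, ?_, h2, ?_⟩
        · intro a ha
          obtain ⟨j, hjI, hjz⟩ := hfail a
          exact h1 a ha ⟨j, (Finset.mem_toList).mpr hjI, hjz⟩
        · calc Γ.depth ≤ I.toList.length + r * k := h3
            _ = I.card + r * k := by rw [Finset.length_toList]
            _ ≤ r + r * k := Nat.add_le_add_right hIcard _
            _ = r * (k + 1) := by ring

/-- if `U` is `r`-i-reduced and a `k`-information system, then every problem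
over `U` is solved by a decision tree using attributes and proper hypotheses of depth
at most `r * k`. -/
theorem stmt4 {A : Type} (F : Set (A → Bool)) (r k : ℕ)
    (hI : IReduced F r) (hK : ExactInfo F k)
    {n : ℕ} (z : Fin n → A → Bool) (hz : ∀ i, z i ∈ F) :
    ∃ Γ : DT n, (∀ a : A, DT.Solves z a Γ) ∧ DT.ProperHyps z Γ ∧
      Γ.depth ≤ r * k := by
  classical
  by_cases hA : Nonempty A
  · rcases Nat.eq_zero_or_pos n with rfl | hn
    · exact ⟨DT.leaf (fun i => i.elim0), fun a i => i.elim0, trivial, Nat.zero_le _⟩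
    · have hr : 1 ≤ r := by
        by_contra hr0
        push_neg at hr0
        have hr0' : r = 0 := by omega
        subst hr0'
        set i0 : Fin n := ⟨0, hn⟩
        set S2 : Set ((A → Bool) × Bool) := {(z i0, true), (z i0, false)} with hS2
        have hover : OverF F S2 := by
          rintro e he
          rcases he with rfl | rfl <;> exact hz i0
        have hfin : S2.Finite := (Set.finite_singleton _).insert _
        have hinc : ¬ Consistent S2 := by
          rintro ⟨a, ha⟩
          have h1 := ha (z i0, true) (by left; rfl)
          have h2 := ha (z i0, false) (by right; rfl)
          simp at h1 h2
          rw [h1] at h2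
          simp at h2
        obtain ⟨T, hTS, hTinc, hTcard⟩ := hI S2 hover hfin hinc
        have hTfin : T.Finite := hfin.subset hTS
        have hT0 : T = ∅ := by
          have := Set.ncard_eq_zero hTfin
          have hc0 : T.ncard = 0 := Nat.le_zero.mp hTcard
          exact this.mp hc0
        apply hTinc
        obtain ⟨a⟩ := hA
        exact ⟨a, fun e he => absurd (hT0 ▸ he) (Set.notMem_empty e)⟩
      obtain ⟨Γ, h1, h2, h3⟩ := key F r hr hI z hz hn k Set.univ hK.1
      exact ⟨Γ, fun a => h1 a trivial, h2, h3⟩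
  · exact ⟨DT.leaf (fun _ => false), fun a => absurd ⟨a⟩ hA, trivial, Nat.zero_le _⟩
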